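/- If a, b, c, d are complex numbers on the unit circle centered at 1 (i.e., |a-1| = |b-1| = |c-1| = |d-1| = 1), none equal to 0, and a*b = c*d, then {a, b} = {c, d} as sets. -/

import Mathlib

lemma circle_conj_eq (z : ℂ) (hz : ‖z - 1‖ = 1) :
    (starRingEnd ℂ) z * (z - 1) = z := by
  have h1 : (z - 1) * (starRingEnd ℂ) (z - 1) = 1 := by
    rw [Complex.mul_conj]
    norm_cast
    rw [← Complex.sq_norm, hz]; norm_num
  rw [map_sub, map_one] at h1
  ring_nf at h1 ⊢
  linear_combination h1

theorem circle_mul_pairs (a b c d : ℂ)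
    (ha : ‖a - 1‖ = 1) (hb : ‖b - 1‖ = 1)
    (hc : ‖c - 1‖ = 1) (hd : ‖d - 1‖ = 1)
    (ha0 : a ≠ 0) (hb0 : b ≠ 0) (hc0 : c ≠ 0) (hd0 : d ≠ 0)
    (h : a * b = c * d) : ({a, b} : Set ℂ) = {c, d} := by
  have Ha := circle_conj_eq a ha
  have Hb := circle_conj_eq b hb
  have Hc := circle_conj_eq c hc
  have Hd := circle_conj_eq d hd
  have hconj : (starRingEnd ℂ) a * (starRingEnd ℂ) b
      = (starRingEnd ℂ) c * (starRingEnd ℂ) d := by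
    rw [← map_mul, ← map_mul, h]
  have hab : a * b ≠ 0 := mul_ne_zero ha0 hb0
  have hcd : c * d ≠ 0 := mul_ne_zero hc0 hd0
  -- (a-1)(b-1) = (c-1)(d-1)
  have hprod : (a - 1) * (b - 1) = (c - 1) * (d - 1) := by
    have e1 : (starRingEnd ℂ) a * (starRingEnd ℂ) b * ((a - 1) * (b - 1)) = a * b := by
      linear_combination (starRingEnd ℂ) b * (b-1) * Ha + a * Hb
    have e2 : (starRingEnd ℂ) c * (starRingEnd ℂ) d * ((c - 1) * (d - 1)) = c * d := by
      linear_combination (starRingEnd ℂ) d * (d-1) * Hc + c * Hd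
    have hcc : (starRingEnd ℂ) a * (starRingEnd ℂ) b ≠ 0 := by
      rw [← map_mul]; simpa using hab
    apply mul_left_cancel₀ hcc
    rw [e1, hconj, e2, h]
  have hsum : a + b = c + d := by linear_combination h - hprod
  have hroot : (a - c) * (a - d) = 0 := by linear_combination a * hsum - h
  rcases mul_eq_zero.mp hroot with h1 | h1
  · have hac : a = c := sub_eq_zero.mp h1
    have hbd : b = d := by linear_combination hsum - hac
    rw [hac, hbd]
  · have had : a = d := sub_eq_zero.mp h1
    have hbc : b = c := by linear_combination hsum - had
    rw [had, hbc, Set.pair_comm]
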